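/- Fix R = 2/3, ε₁ ∈ (0, 1/2) and m ≥ 0. There exists a constant C > 0 such that for all ρ ∈ [1/2, 2], all u ∈ ℝ³ with |u| ≤ 1 and all θ ∈ [1, 3 − 4ε₁], the integral ∫_{ℝ³} (1 + |v|²)^m · M_{[ρ,u,θ]}(v)^{2(1 − ε₁)} · μ(v)^{−1} dv is finite and bounded by C. -/

import Mathlib

set_option maxHeartbeats 1000000
open Real


open MeasureTheory

/-- The local Maxwellian `M_{[ρ,u,θ]}(v) = ρ (2πRθ)^{−3/2} exp(−|v−u|²/(2Rθ))`. -/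
noncomputable def localMaxwellian (R ρ θ : ℝ) (u v : EuclideanSpace ℝ (Fin 3)) : ℝ :=
  ρ * (2 * Real.pi * R * θ) ^ (-(3 : ℝ) / 2) * Real.exp (-‖v - u‖ ^ 2 / (2 * R * θ))

/-- The global Maxwellian `μ(v) = (2π)^{−3/2} exp(−|v|²/2) = M_{[1,0,3/2]}` (R = 2/3). -/
noncomputable def globalMaxwellian (v : EuclideanSpace ℝ (Fin 3)) : ℝ :=
  (2 * Real.pi) ^ (-(3 : ℝ) / 2) * Real.exp (-‖v‖ ^ 2 / 2)

lemma gauss_int {b : ℝ} (hb : 0 < b) :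
    Integrable (fun v : EuclideanSpace ℝ (Fin 3) => Real.exp (-b * ‖v‖ ^ 2)) := by
  have h := (GaussianFourier.integrable_cexp_neg_mul_sq_norm_add
      (V := EuclideanSpace ℝ (Fin 3)) (b := (b : ℂ))
      (by simpa using hb) 0 (0 : EuclideanSpace ℝ (Fin 3))).norm
  refine h.congr ?_
  filter_upwards with v
  rw [Complex.norm_exp]
  norm_num
  left
  norm_cast

lemma gauss_val {b : ℝ} (hb : 0 < b) :
    ∫ v : EuclideanSpace ℝ (Fin 3), Real.exp (-b * ‖v‖ ^ 2) = (π / b) ^ ((3 : ℝ) / 2) := by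
  rw [GaussianFourier.integral_rexp_neg_mul_sq_norm hb]
  norm_num


lemma aux_sq {x y : ℝ} (hx0 : 0 ≤ x) (hy0 : 0 ≤ y) (hxy : x - 1 ≤ y) :
    x ^ 2 - 2 * x ≤ y ^ 2 := by
  nlinarith [sq_nonneg (y - (x - 1)), sq_nonneg (y + (x - 1))]

lemma aux_exp {δ a x y : ℝ} (hδ0 : 0 < δ) (hδ4 : δ ≤ 1 / 4)
    (ha1 : 1 / 2 + δ ≤ a) (ha2 : a ≤ 3 / 2)
    (hx0 : 0 ≤ x) (hy0 : 0 ≤ y) (hxy : x - 1 ≤ y) :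
    -(a * y ^ 2) + x ^ 2 / 2 ≤ 3 / δ - (δ / 2) * x ^ 2 := by
  have ha0 : 0 < a := by linarith
  have h1 : x ^ 2 - 2 * x ≤ y ^ 2 := aux_sq hx0 hy0 hxy
  have h3 : a * (x ^ 2 - 2 * x) ≤ a * y ^ 2 := mul_le_mul_of_nonneg_left h1 ha0.le
  have hAM : 2 * x ≤ (δ / 2) * x ^ 2 + 2 / δ := by
    have hδne : δ ≠ 0 := ne_of_gt hδ0
    have hid : (δ / 2) * x ^ 2 + 2 / δ - 2 * x = (δ / 2) * (x - 2 / δ) ^ 2 := by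
      field_simp
      ring
    nlinarith [mul_nonneg (by linarith : (0 : ℝ) ≤ δ / 2) (sq_nonneg (x - 2 / δ))]
  have s2 : a * (2 * x) ≤ a * ((δ / 2) * x ^ 2 + 2 / δ) :=
    mul_le_mul_of_nonneg_left hAM ha0.le
  have s3 : a * (2 / δ) ≤ 3 / δ := by
    calc a * (2 / δ) ≤ (3 / 2) * (2 / δ) :=
          mul_le_mul_of_nonneg_right ha2 (by positivity)
      _ = 3 / δ := by ring
  have s5 : (1 / 2 + δ) * ((1 - δ / 2) * x ^ 2) ≤ a * ((1 - δ / 2) * x ^ 2) :=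
    mul_le_mul_of_nonneg_right ha1 (mul_nonneg (by linarith) (sq_nonneg x))
  have s7 : δ * (δ * x ^ 2) ≤ (1 / 4) * (δ * x ^ 2) :=
    mul_le_mul_of_nonneg_right hδ4 (mul_nonneg hδ0.le (sq_nonneg x))
  have s8 : 0 ≤ δ * x ^ 2 := mul_nonneg hδ0.le (sq_nonneg x)
  nlinarith [h3, s2, s3, s5, s7, s8]

/-- Uniform weighted integrability of `M^{2(1−ε₁)}/μ`: with `R = 2/3`, for
`ε₁ ∈ (0,1/2)` and `m ≥ 0` there is `C > 0` such that for all `ρ ∈ [1/2,2]`,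
`|u| ≤ 1`, `θ ∈ [1, 3−4ε₁]`, the integral
`∫ (1+|v|²)^m M_{[ρ,u,θ]}(v)^{2(1−ε₁)} μ(v)⁻¹ dv` is finite and `≤ C`. -/
theorem maxwellian_power_weighted_integrable
    (ε₁ m : ℝ) (hε0 : 0 < ε₁) (hε : ε₁ < 1 / 2) (hm : 0 ≤ m) :
    ∃ C : ℝ, 0 < C ∧
      ∀ (ρ θ : ℝ) (u : EuclideanSpace ℝ (Fin 3)),
        ρ ∈ Set.Icc (1 / 2 : ℝ) 2 → ‖u‖ ≤ 1 → θ ∈ Set.Icc (1 : ℝ) (3 - 4 * ε₁) →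
        Integrable (fun v : EuclideanSpace ℝ (Fin 3) =>
          (1 + ‖v‖ ^ 2) ^ m * localMaxwellian (2 / 3) ρ θ u v ^ (2 * (1 - ε₁))
            / globalMaxwellian v) ∧
        (∫ v : EuclideanSpace ℝ (Fin 3),
            (1 + ‖v‖ ^ 2) ^ m * localMaxwellian (2 / 3) ρ θ u v ^ (2 * (1 - ε₁))
              / globalMaxwellian v)
          ≤ C := by
  have hπ := Real.pi_pos
  have hden : (1 : ℝ) < 3 - 4 * ε₁ := by linarith
  set δ : ℝ := ε₁ / (2 * (3 - 4 * ε₁)) with hδdef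
  have hδ0 : 0 < δ := by positivity
  have hδne : δ ≠ 0 := ne_of_gt hδ0
  have hδeq : δ * (2 * (3 - 4 * ε₁)) = ε₁ := div_mul_cancel₀ _ (by positivity)
  have hδ4 : δ ≤ 1 / 4 := by
    rw [hδdef, div_le_iff₀ (by positivity)]; nlinarith
  set p : ℝ := 2 * (1 - ε₁) with hpdef
  have hp0 : 0 < p := by simp only [hpdef]; linarith
  have hp2 : p ≤ 2 := by simp only [hpdef]; linarith
  set B : ℝ := 2 * (2 * Real.pi * (2 / 3)) ^ (-(3 : ℝ) / 2) with hBdef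
  have hB : 0 < B := by positivity
  set ε' : ℝ := δ / (4 * (m + 1)) with hε'def
  have hε'0 : 0 < ε' := by positivity
  have hε'9 : (0 : ℝ) ≤ 1 + 1 / ε' := by
    have := one_div_pos.2 hε'0; linarith
  have hε'm : ε' * m ≤ δ / 4 := by
    rw [hε'def, div_mul_eq_mul_div, div_le_div_iff₀ (by linarith) (by norm_num)]
    nlinarith [mul_nonneg hδ0.le hm]
  set K₁ : ℝ := (1 + 1 / ε') ^ m with hK₁def
  have hK₁ : 0 < K₁ := by
    rw [hK₁def]
    exact Real.rpow_pos_of_pos (by have := one_div_pos.2 hε'0; linarith) m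
  set D : ℝ := K₁ * (B ^ p * (2 * Real.pi) ^ ((3 : ℝ) / 2)) * Real.exp (3 / δ) with hDdef
  have hD : 0 < D := by
    apply mul_pos (mul_pos hK₁ (mul_pos (Real.rpow_pos_of_pos hB p)
      (Real.rpow_pos_of_pos (by positivity) _))) (Real.exp_pos _)
  have hb : 0 < δ / 4 := by positivity
  clear_value ε' K₁ B D
  have hgi : Integrable (fun v : EuclideanSpace ℝ (Fin 3) =>
      D * Real.exp (-(δ / 4) * ‖v‖ ^ 2)) := (gauss_int hb).const_mul D
  refine ⟨D * (π / (δ / 4)) ^ ((3 : ℝ) / 2),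
    mul_pos hD (Real.rpow_pos_of_pos (div_pos hπ hb) _), ?_⟩
  intro ρ θ u hρ hu hθ
  obtain ⟨hρ1, hρ2⟩ := hρ
  obtain ⟨hθ1, hθ2⟩ := hθ
  have hρ0 : (0 : ℝ) < ρ := by linarith
  have hθ0 : (0 : ℝ) < θ := lt_of_lt_of_le one_pos hθ1
  set a : ℝ := p / (2 * (2 / 3) * θ) with hadef
  have ha0 : 0 < a := by positivity
  have ha1 : 1 / 2 + δ ≤ a := by
    rw [hadef, le_div_iff₀ (by positivity)]
    nlinarith [mul_le_mul_of_nonneg_left hθ2 hδ0.le]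
  have ha2 : a ≤ 3 / 2 := by
    rw [hadef, div_le_iff₀ (by positivity)]
    nlinarith
  have hc₀ : (0 : ℝ) < (2 * Real.pi * (2 / 3) * θ) ^ (-(3 : ℝ) / 2) :=
    Real.rpow_pos_of_pos (by positivity) _
  clear_value a
  -- rewrite the integrand
  have key : ∀ v : EuclideanSpace ℝ (Fin 3),
      (1 + ‖v‖ ^ 2) ^ m * localMaxwellian (2 / 3) ρ θ u v ^ (2 * (1 - ε₁))
        / globalMaxwellian v
      = (1 + ‖v‖ ^ 2) ^ m
          * ((ρ * (2 * Real.pi * (2 / 3) * θ) ^ (-(3 : ℝ) / 2)) ^ p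
              * (2 * Real.pi) ^ ((3 : ℝ) / 2))
          * Real.exp (-(a * ‖v - u‖ ^ 2) + ‖v‖ ^ 2 / 2) := by
    intro v
    rw [localMaxwellian, globalMaxwellian, ← hpdef,
      Real.mul_rpow (mul_pos hρ0 hc₀).le (Real.exp_pos _).le, ← Real.exp_mul,
      div_eq_mul_inv, mul_inv, ← Real.rpow_neg (by positivity), ← Real.exp_neg]
    have h2 : -(-(3 : ℝ) / 2) = (3 : ℝ) / 2 := by norm_num
    have h2' : -(-‖v‖ ^ 2 / 2) = ‖v‖ ^ 2 / 2 := by ring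
    rw [h2, h2']
    have h3 : Real.exp (-‖v - u‖ ^ 2 / (2 * (2 / 3) * θ) * p) * Real.exp (‖v‖ ^ 2 / 2)
        = Real.exp (-(a * ‖v - u‖ ^ 2) + ‖v‖ ^ 2 / 2) := by
      rw [← Real.exp_add]
      congr 1
      rw [hadef]
      field_simp
    rw [← h3]
    ring
  -- pointwise bound
  have hbound : ∀ v : EuclideanSpace ℝ (Fin 3),
      (1 + ‖v‖ ^ 2) ^ m * localMaxwellian (2 / 3) ρ θ u v ^ (2 * (1 - ε₁))
        / globalMaxwellian v ≤ D * Real.exp (-(δ / 4) * ‖v‖ ^ 2) := by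
    intro v
    rw [key v]
    set x : ℝ := ‖v‖ with hxdef
    have hx0 : 0 ≤ x := norm_nonneg v
    set y : ℝ := ‖v - u‖ with hydef
    have hy0 : 0 ≤ y := norm_nonneg _
    have hxy : x - 1 ≤ y := by
      have h := norm_sub_norm_le v u
      rw [← hxdef, ← hydef] at h
      linarith
    clear_value x y
    -- bound 1: polynomial weight
    have hw : (1 + x ^ 2) ^ m ≤ K₁ * Real.exp ((δ / 4) * x ^ 2) := by
      have h1 : 1 + x ^ 2 ≤ (1 + 1 / ε') * Real.exp (ε' * x ^ 2) := by
        have hee := Real.add_one_le_exp (ε' * x ^ 2)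
        have h4 : (1 + 1 / ε') * (ε' * x ^ 2 + 1) ≤ (1 + 1 / ε') * Real.exp (ε' * x ^ 2) :=
          mul_le_mul_of_nonneg_left hee hε'9
        have h6 : (1 / ε') * (ε' * x ^ 2) = x ^ 2 := by
          rw [← mul_assoc, one_div_mul_cancel (ne_of_gt hε'0), one_mul]
        have h7 : (1 + 1 / ε') * (ε' * x ^ 2 + 1)
            = ε' * x ^ 2 + 1 + (1 / ε') * (ε' * x ^ 2) + 1 / ε' := by ring
        have h8 : (0 : ℝ) ≤ ε' * x ^ 2 := mul_nonneg hε'0.le (sq_nonneg x)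
        have h9 : (0 : ℝ) ≤ 1 / ε' := (one_div_pos.2 hε'0).le
        linarith
      calc (1 + x ^ 2) ^ m ≤ ((1 + 1 / ε') * Real.exp (ε' * x ^ 2)) ^ m :=
            Real.rpow_le_rpow (by positivity) h1 hm
        _ = K₁ * Real.exp (ε' * x ^ 2 * m) := by
            rw [Real.mul_rpow hε'9 (Real.exp_pos _).le, ← Real.exp_mul, hK₁def]
        _ ≤ K₁ * Real.exp ((δ / 4) * x ^ 2) := by
            have h10 := mul_le_mul_of_nonneg_right hε'm (sq_nonneg x)
            have : ε' * x ^ 2 * m ≤ (δ / 4) * x ^ 2 := by nlinarith [h10]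
            exact mul_le_mul_of_nonneg_left (Real.exp_le_exp.2 this) hK₁.le
    -- bound 2: constant prefactor
    have hA : (ρ * (2 * Real.pi * (2 / 3) * θ) ^ (-(3 : ℝ) / 2)) ^ p ≤ B ^ p := by
      apply Real.rpow_le_rpow (mul_pos hρ0 hc₀).le _ hp0.le
      rw [hBdef]
      have hmono : (2 * Real.pi * (2 / 3) * θ) ^ (-(3 : ℝ) / 2)
          ≤ (2 * Real.pi * (2 / 3)) ^ (-(3 : ℝ) / 2) := by
        apply Real.rpow_le_rpow_of_nonpos (by positivity) _ (by norm_num)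
        nlinarith [mul_le_mul_of_nonneg_left hθ1 hπ.le]
      calc ρ * (2 * Real.pi * (2 / 3) * θ) ^ (-(3 : ℝ) / 2)
          ≤ 2 * (2 * Real.pi * (2 / 3)) ^ (-(3 : ℝ) / 2) :=
            mul_le_mul hρ2 hmono hc₀.le (by norm_num)
        _ = _ := rfl
    -- bound 3: exponent
    have hexp : -(a * y ^ 2) + x ^ 2 / 2 ≤ 3 / δ - (δ / 2) * x ^ 2 :=
      aux_exp hδ0 hδ4 ha1 ha2 hx0 hy0 hxy
    have e1 : (0 : ℝ) ≤ (2 * Real.pi) ^ ((3 : ℝ) / 2) := by positivity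
    calc (1 + x ^ 2) ^ m
          * ((ρ * (2 * Real.pi * (2 / 3) * θ) ^ (-(3 : ℝ) / 2)) ^ p
              * (2 * Real.pi) ^ ((3 : ℝ) / 2))
          * Real.exp (-(a * y ^ 2) + x ^ 2 / 2)
        ≤ (K₁ * Real.exp ((δ / 4) * x ^ 2))
            * (B ^ p * (2 * Real.pi) ^ ((3 : ℝ) / 2))
            * Real.exp (3 / δ - (δ / 2) * x ^ 2) := by
          apply mul_le_mul
          · exact mul_le_mul hw (mul_le_mul_of_nonneg_right hA e1)
              (mul_nonneg (Real.rpow_nonneg (mul_pos hρ0 hc₀).le p) e1)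
              (mul_nonneg hK₁.le (Real.exp_pos _).le)
          · exact Real.exp_le_exp.2 hexp
          · exact (Real.exp_pos _).le
          · exact mul_nonneg (mul_nonneg hK₁.le (Real.exp_pos _).le)
              (mul_nonneg (Real.rpow_nonneg hB.le p) e1)
      _ = D * Real.exp (-(δ / 4) * x ^ 2) := by
          have hE : Real.exp (δ / 4 * x ^ 2) * Real.exp (3 / δ - δ / 2 * x ^ 2)
              = Real.exp (3 / δ) * Real.exp (-(δ / 4) * x ^ 2) := by
            rw [← Real.exp_add, ← Real.exp_add]
            congr 1
            ring
          rw [hDdef]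
          linear_combination (B ^ p * (2 * Real.pi) ^ ((3 : ℝ) / 2) * K₁) * hE
  have hloc : ∀ v : EuclideanSpace ℝ (Fin 3),
      (0 : ℝ) < localMaxwellian (2 / 3) ρ θ u v := by
    intro v
    rw [localMaxwellian]
    exact mul_pos (mul_pos hρ0 hc₀) (Real.exp_pos _)
  have hglob : ∀ v : EuclideanSpace ℝ (Fin 3), (0 : ℝ) < globalMaxwellian v := by
    intro v
    rw [globalMaxwellian]
    positivity
  have hnn : ∀ v : EuclideanSpace ℝ (Fin 3),
      0 ≤ (1 + ‖v‖ ^ 2) ^ m * localMaxwellian (2 / 3) ρ θ u v ^ (2 * (1 - ε₁))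
        / globalMaxwellian v := by
    intro v
    exact div_nonneg (mul_nonneg (Real.rpow_nonneg (by positivity) m)
      (Real.rpow_nonneg (hloc v).le _)) (hglob v).le
  have hcont : Continuous (fun v : EuclideanSpace ℝ (Fin 3) =>
      (1 + ‖v‖ ^ 2) ^ m * localMaxwellian (2 / 3) ρ θ u v ^ (2 * (1 - ε₁))
        / globalMaxwellian v) := by
    have hL : Continuous (fun v : EuclideanSpace ℝ (Fin 3) =>
        localMaxwellian (2 / 3) ρ θ u v) := by
      simp only [localMaxwellian]
      exact continuous_const.mul (Real.continuous_exp.comp (by fun_prop))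
    apply Continuous.div
    · apply Continuous.mul
      · apply Continuous.rpow_const (by fun_prop)
        intro v; left; positivity
      · apply Continuous.rpow_const hL
        intro v
        exact Or.inl (ne_of_gt (hloc v))
    · unfold globalMaxwellian
      exact continuous_const.mul (Real.continuous_exp.comp (by fun_prop))
    · intro v
      exact ne_of_gt (hglob v)
  have hint : Integrable (fun v : EuclideanSpace ℝ (Fin 3) =>
      (1 + ‖v‖ ^ 2) ^ m * localMaxwellian (2 / 3) ρ θ u v ^ (2 * (1 - ε₁))
        / globalMaxwellian v) := by
    apply hgi.mono' hcont.aestronglyMeasurable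
    filter_upwards with v
    rw [Real.norm_eq_abs, abs_of_nonneg (hnn v)]
    exact hbound v
  refine ⟨hint, ?_⟩
  calc (∫ v : EuclideanSpace ℝ (Fin 3),
        (1 + ‖v‖ ^ 2) ^ m * localMaxwellian (2 / 3) ρ θ u v ^ (2 * (1 - ε₁))
          / globalMaxwellian v)
      ≤ ∫ v : EuclideanSpace ℝ (Fin 3), D * Real.exp (-(δ / 4) * ‖v‖ ^ 2) :=
        integral_mono hint hgi hbound
    _ = D * (π / (δ / 4)) ^ ((3 : ℝ) / 2) := by
        rw [integral_const_mul, gauss_val hb]
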